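/- Let S, G, T ∈ ℝ^{l×l} be symmetric positive definite with T ⪰ S G⁻¹ S, and let P be the rank-r spectral projection of S. Then trace(S T⁻¹ P) ≤ trace(G S⁻¹ P). -/

import Mathlib

open Matrix

section AuxMPZ
variable {n : Type*} [Fintype n] [DecidableEq n]

lemma psd_trace_nonneg' {A : Matrix n n ℝ} (hA : A.PosSemidef) : 0 ≤ A.trace := by
  rw [Matrix.trace]
  refine Finset.sum_nonneg fun i _ => ?_
  have h := hA.dotProduct_mulVec_nonneg (Pi.single i 1)
  simpa [Matrix.diag, dotProduct, Matrix.mulVec, Pi.single_apply] using h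

open scoped MatrixOrder in
lemma trace_mul_nonneg' {A B : Matrix n n ℝ} (hA : A.PosSemidef) (hB : B.PosSemidef) :
    0 ≤ (A * B).trace := by
  have h1 : A * B = A * (CFC.sqrt B * CFC.sqrt B) := by rw [CFC.sqrt_mul_sqrt_self B hB.nonneg]
  have h3 : (CFC.sqrt B * A * CFC.sqrt B).PosSemidef := by
    have h := hA.conjTranspose_mul_mul_same (CFC.sqrt B)
    rwa [(CFC.sqrt_nonneg B).posSemidef.1.eq] at h
  have h2 : (A * B).trace = (CFC.sqrt B * A * CFC.sqrt B).trace := by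
    rw [h1, ← Matrix.mul_assoc, Matrix.trace_mul_cycle]
  rw [h2]; exact psd_trace_nonneg' h3

lemma inv_sub_inv_psd' {A B : Matrix n n ℝ} (hA : A.PosDef) (hB : B.PosDef)
    (h : (B - A).PosSemidef) : (A⁻¹ - B⁻¹).PosSemidef := by
  have hAd : IsUnit A.det := (Matrix.isUnit_iff_isUnit_det A).mp hA.isUnit
  have hBd : IsUnit B.det := (Matrix.isUnit_iff_isUnit_det B).mp hB.isUnit
  have hAi : (A⁻¹)ᴴ = A⁻¹ := hA.posSemidef.inv.1.eq
  have hBi : (B⁻¹)ᴴ = B⁻¹ := hB.posSemidef.inv.1.eq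
  have key : (A⁻¹ - B⁻¹)ᴴ * A * (A⁻¹ - B⁻¹) + (B⁻¹)ᴴ * (B - A) * B⁻¹ = A⁻¹ - B⁻¹ := by
    rw [conjTranspose_sub, hAi, hBi]
    have t1 : (A⁻¹ - B⁻¹) * A * (A⁻¹ - B⁻¹)
        = A⁻¹ - B⁻¹ - B⁻¹ + B⁻¹ * A * B⁻¹ := by
      rw [Matrix.sub_mul, Matrix.nonsing_inv_mul A hAd, Matrix.sub_mul, Matrix.one_mul,
        Matrix.mul_sub, Matrix.mul_nonsing_inv_cancel_right _ _ hAd]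
      abel
    have t2 : B⁻¹ * (B - A) * B⁻¹ = B⁻¹ - B⁻¹ * A * B⁻¹ := by
      rw [Matrix.mul_sub, Matrix.nonsing_inv_mul B hBd, Matrix.sub_mul, Matrix.one_mul]
    rw [t1, t2]; abel
  rw [← key]
  exact (hA.posSemidef.conjTranspose_mul_mul_same _).add (h.conjTranspose_mul_mul_same _)

lemma posdef_conj' {A U : Matrix n n ℝ} (hA : A.PosDef) (hU : IsUnit U.det) :
    (Uᴴ * A * U).PosDef := by
  refine Matrix.PosDef.of_dotProduct_mulVec_pos (Matrix.isHermitian_conjTranspose_mul_mul U hA.1) fun x hx => ?_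
  have hUx : U *ᵥ x ≠ 0 := by
    intro hzero
    apply hx
    have h2 : U⁻¹ *ᵥ (U *ᵥ x) = x := by
      rw [Matrix.mulVec_mulVec, Matrix.nonsing_inv_mul U hU, Matrix.one_mulVec]
    rw [hzero, Matrix.mulVec_zero] at h2; exact h2.symm
  have h := hA.dotProduct_mulVec_pos hUx
  rwa [Matrix.star_mulVec, ← Matrix.dotProduct_mulVec, Matrix.mulVec_mulVec,
    Matrix.mulVec_mulVec] at h

end AuxMPZ

noncomputable def indDiag (l r : ℕ) : Matrix (Fin l) (Fin l) ℝ :=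
  Matrix.diagonal (fun i => if (i : ℕ) < r then (1 : ℝ) else 0)

/-- if T ⪰ S G⁻¹ S then trace(S T⁻¹ P) ≤ trace(G S⁻¹ P), where
P is the rank-r spectral projection of S. -/
theorem mpz_rr_le_mai_rr
    (l r : ℕ) (hr1 : 1 ≤ r) (hrl : r ≤ l)
    (S G T V : Matrix (Fin l) (Fin l) ℝ) (d : Fin l → ℝ)
    (hSsym : S.IsSymm) (hSpd : S.PosDef)
    (hGsym : G.IsSymm) (hGpd : G.PosDef)
    (hTsym : T.IsSymm) (hTpd : T.PosDef)
    (hLoewner : (T - S * G⁻¹ * S).PosSemidef)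
    (hV : Vᵀ * V = 1) (hd : Antitone d)
    (hSdec : S = V * Matrix.diagonal d * Vᵀ)
    (P : Matrix (Fin l) (Fin l) ℝ) (hP : P = V * indDiag l r * Vᵀ) :
    (S * T⁻¹ * P).trace ≤ (G * S⁻¹ * P).trace := by
  have hdS : IsUnit S.det := (Matrix.isUnit_iff_isUnit_det S).mp hSpd.isUnit
  have hdG : IsUnit G.det := (Matrix.isUnit_iff_isUnit_det G).mp hGpd.isUnit
  have hcanc : ∀ X : Matrix (Fin l) (Fin l) ℝ, Vᵀ * (V * X) = X := fun X => by
    rw [← Matrix.mul_assoc, hV, Matrix.one_mul]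
  have hVH : Vᴴ = Vᵀ := Matrix.conjTranspose_eq_transpose_of_trivial V
  have hSH : Sᴴ = S := by
    rw [Matrix.conjTranspose_eq_transpose_of_trivial, hSsym.eq]
  -- commutation of P and S
  have hIrD : indDiag l r * Matrix.diagonal d = Matrix.diagonal d * indDiag l r := by
    unfold indDiag
    rw [Matrix.diagonal_mul_diagonal, Matrix.diagonal_mul_diagonal]
    exact congrArg Matrix.diagonal (funext fun i => mul_comm _ _)
  have hcomm : P * S = S * P := by
    rw [hP, hSdec]
    simp only [Matrix.mul_assoc, hcanc]
    rw [← Matrix.mul_assoc (indDiag l r), ← Matrix.mul_assoc (Matrix.diagonal d), hIrD]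
  have hcommInv : S⁻¹ * P = P * S⁻¹ := by
    have h1 : S⁻¹ * (P * S) * S⁻¹ = S⁻¹ * P := by
      rw [Matrix.mul_assoc, Matrix.mul_assoc, Matrix.mul_nonsing_inv _ hdS, Matrix.mul_one]
    have h2 : S⁻¹ * (S * P) * S⁻¹ = P * S⁻¹ := by
      rw [← Matrix.mul_assoc, Matrix.nonsing_inv_mul _ hdS, Matrix.one_mul]
    rw [← h1, hcomm, h2]
  -- M = S G⁻¹ S is positive definite
  have hMpd : (S * G⁻¹ * S).PosDef := by
    have h := posdef_conj' hGpd.inv hdS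
    rwa [hSH] at h
  have hMinv : (S * G⁻¹ * S)⁻¹ = S⁻¹ * G * S⁻¹ := by
    rw [Matrix.mul_inv_rev, Matrix.mul_inv_rev, Matrix.nonsing_inv_nonsing_inv G hdG,
      Matrix.mul_assoc]
  have hN : (S⁻¹ * G * S⁻¹ - T⁻¹).PosSemidef := by
    rw [← hMinv]; exact inv_sub_inv_psd' hMpd hTpd hLoewner
  -- diagonal entries of d are nonnegative
  have hDeq : Vᵀ * S * V = Matrix.diagonal d := by
    rw [hSdec]
    simp only [Matrix.mul_assoc, hcanc, hV, Matrix.mul_one]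
  have hDpsd : (Matrix.diagonal d).PosSemidef := by
    have h := hSpd.posSemidef.mul_mul_conjTranspose_same Vᵀ
    rw [Matrix.conjTranspose_eq_transpose_of_trivial, Matrix.transpose_transpose] at h
    rwa [hDeq] at h
  have hdnn : ∀ i, 0 ≤ d i := fun i => by
    have := Matrix.posSemidef_diagonal_iff.mp hDpsd
    exact this i
  -- S * P is PSD
  have hSPeq : S * P = V * Matrix.diagonal
      (fun i => d i * (if (i : ℕ) < r then (1 : ℝ) else 0)) * Vᵀ := by
    rw [hSdec, hP]
    simp only [Matrix.mul_assoc, hcanc]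
    rw [← Matrix.mul_assoc (Matrix.diagonal d)]
    unfold indDiag
    rw [Matrix.diagonal_mul_diagonal]
  have hQpsd : (S * P).PosSemidef := by
    rw [hSPeq]
    have he : (0 : Fin l → ℝ) ≤ fun i => d i * (if (i : ℕ) < r then (1 : ℝ) else 0) := by
      intro i
      dsimp only [Pi.zero_apply]
      split <;> simp [hdnn i]
    have h := (Matrix.PosSemidef.diagonal he).mul_mul_conjTranspose_same V
    rwa [hVH] at h
  -- put everything together
  have key : 0 ≤ ((S⁻¹ * G * S⁻¹ - T⁻¹) * (S * P)).trace := trace_mul_nonneg' hN hQpsd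
  have expand : ((S⁻¹ * G * S⁻¹ - T⁻¹) * (S * P)).trace
      = ((S⁻¹ * G * S⁻¹) * (S * P)).trace - (T⁻¹ * (S * P)).trace := by
    rw [Matrix.sub_mul, Matrix.trace_sub]
  have e1 : ((S⁻¹ * G * S⁻¹) * (S * P)).trace = (G * S⁻¹ * P).trace := by
    have h : (S⁻¹ * G * S⁻¹) * (S * P) = S⁻¹ * G * P := by
      rw [← Matrix.mul_assoc, Matrix.nonsing_inv_mul_cancel_right _ _ hdS]
    rw [h, Matrix.trace_mul_cycle, ← hcommInv, Matrix.trace_mul_cycle]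
  have e2 : (T⁻¹ * (S * P)).trace = (S * T⁻¹ * P).trace := by
    rw [Matrix.trace_mul_comm, ← hcomm, ← Matrix.trace_mul_cycle]
  rw [expand, e1, e2] at key
  linarith
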